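/- Let a<b and T>0 be real numbers, and let ρ,σ:[a,b]→ℝ be continuous with ρ(x)>0 for all x. Let u,v:ℝ²→ℂ be twice continuously differentiable functions such that ρ(x)∂ₜ²u(t,x)+σ(x)∂ₜu(t,x)−∂ₓ²u(t,x)=0 and ρ(x)∂ₜ²v(t,x)+σ(x)∂ₜv(t,x)−∂ₓ²v(t,x)=0 for all (t,x)∈[0,2T]×[a,b], and such that u(0,x)=∂ₜu(0,x)=v(0,x)=∂ₜv(0,x)=0 for all x∈[a,b]. Then ∫ₐᵇ(ρ(x)·∂ₜu(T,x)·∂ₜv(T,x)−∂ₓu(T,x)·∂ₓv(T,x))dx = ∫₀ᵀ([∂ₓu(τ,b)·∂ₜv(2T−τ,b)−∂ₜu(τ,b)·∂ₓv(2T−τ,b)]−[∂ₓu(τ,a)·∂ₜv(2T−τ,a)−∂ₜu(τ,a)·∂ₓv(2T−τ,a)])dτ. -/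

import Mathlib

open MeasureTheory intervalIntegral

/-- Partial derivative in the first (time) variable. -/
noncomputable def dt (f : ℝ → ℝ → ℂ) (t x : ℝ) : ℂ := deriv (fun τ => f τ x) t

/-- Partial derivative in the second (space) variable. -/
noncomputable def dx (f : ℝ → ℝ → ℂ) (t x : ℝ) : ℂ := deriv (fun y => f t y) x

/-- Second partial derivative in time. -/
noncomputable def dtt (f : ℝ → ℝ → ℂ) (t x : ℝ) : ℂ := deriv (fun τ => dt f τ x) t

/-- Second partial derivative in space. -/
noncomputable def dxx (f : ℝ → ℝ → ℂ) (t x : ℝ) : ℂ := deriv (fun y => dx f t y) x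

/-! ### Auxiliary machinery for partial derivatives -/

/-- Directional partial derivative of `w` seen as a function on `ℝ × ℝ`. -/
noncomputable def pd (w : ℝ → ℝ → ℂ) (e p : ℝ × ℝ) : ℂ :=
  fderiv ℝ (fun q : ℝ × ℝ => w q.1 q.2) p e

/-- Second directional partial derivative. -/
noncomputable def pd2 (w : ℝ → ℝ → ℂ) (e₁ e₂ p : ℝ × ℝ) : ℂ :=
  fderiv ℝ (pd w e₂) p e₁

lemma hasDerivAt_slice_fst {Φ : ℝ × ℝ → ℂ} (hΦ : Differentiable ℝ Φ) (t x : ℝ) :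
    HasDerivAt (fun τ => Φ (τ, x)) (fderiv ℝ Φ (t, x) (1, 0)) t := by
  have hline : HasDerivAt (fun τ : ℝ => ((τ, x) : ℝ × ℝ)) ((1 : ℝ), (0 : ℝ)) t :=
    (hasDerivAt_id t).prodMk (hasDerivAt_const t x)
  exact (hΦ (t, x)).hasFDerivAt.comp_hasDerivAt t hline

lemma hasDerivAt_slice_snd {Φ : ℝ × ℝ → ℂ} (hΦ : Differentiable ℝ Φ) (t x : ℝ) :
    HasDerivAt (fun y => Φ (t, y)) (fderiv ℝ Φ (t, x) (0, 1)) x := by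
  have hline : HasDerivAt (fun y : ℝ => ((t, y) : ℝ × ℝ)) ((0 : ℝ), (1 : ℝ)) x :=
    (hasDerivAt_const x t).prodMk (hasDerivAt_id x)
  exact (hΦ (t, x)).hasFDerivAt.comp_hasDerivAt x hline

section PD

variable {w : ℝ → ℝ → ℂ} (hw : ContDiff ℝ 2 (fun p : ℝ × ℝ => w p.1 p.2))

include hw

lemma pd_contDiff (e : ℝ × ℝ) : ContDiff ℝ 1 (pd w e) := by
  have h1 : ContDiff ℝ 1 (fderiv ℝ (fun q : ℝ × ℝ => w q.1 q.2)) :=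
    hw.fderiv_right (by norm_num)
  exact (ContinuousLinearMap.apply ℝ ℂ e).contDiff.comp h1

lemma pd_continuous (e : ℝ × ℝ) : Continuous (pd w e) :=
  (pd_contDiff hw e).continuous

lemma pd_diff (e : ℝ × ℝ) : Differentiable ℝ (pd w e) :=
  (pd_contDiff hw e).differentiable one_ne_zero

lemma pd2_continuous (e₁ e₂ : ℝ × ℝ) : Continuous (pd2 w e₁ e₂) := by
  have h : Continuous (fderiv ℝ (pd w e₂)) :=
    (pd_contDiff hw e₂).continuous_fderiv one_ne_zero
  exact h.clm_apply continuous_const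

lemma hasDerivAt_dt' (t x : ℝ) :
    HasDerivAt (fun τ => w τ x) (pd w (1, 0) (t, x)) t :=
  hasDerivAt_slice_fst (hw.differentiable (by norm_num)) t x

lemma hasDerivAt_dx' (t x : ℝ) :
    HasDerivAt (fun y => w t y) (pd w (0, 1) (t, x)) x :=
  hasDerivAt_slice_snd (hw.differentiable (by norm_num)) t x

lemma dt_eq (t x : ℝ) : dt w t x = pd w (1, 0) (t, x) :=
  (hasDerivAt_dt' hw t x).deriv

lemma dx_eq (t x : ℝ) : dx w t x = pd w (0, 1) (t, x) :=
  (hasDerivAt_dx' hw t x).deriv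

lemma hasDerivAt_pd_fst (e : ℝ × ℝ) (t x : ℝ) :
    HasDerivAt (fun τ => pd w e (τ, x)) (pd2 w (1, 0) e (t, x)) t :=
  hasDerivAt_slice_fst (pd_diff hw e) t x

lemma hasDerivAt_pd_snd (e : ℝ × ℝ) (t x : ℝ) :
    HasDerivAt (fun y => pd w e (t, y)) (pd2 w (0, 1) e (t, x)) x :=
  hasDerivAt_slice_snd (pd_diff hw e) t x

lemma dtt_eq (t x : ℝ) : dtt w t x = pd2 w (1, 0) (1, 0) (t, x) := by
  have h : (fun τ => dt w τ x) = fun τ => pd w (1, 0) (τ, x) :=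
    funext fun τ => dt_eq hw τ x
  rw [dtt, h]
  exact (hasDerivAt_pd_fst hw (1, 0) t x).deriv

lemma dxx_eq (t x : ℝ) : dxx w t x = pd2 w (0, 1) (0, 1) (t, x) := by
  have h : (fun y => dx w t y) = fun y => pd w (0, 1) (t, y) :=
    funext fun y => dx_eq hw t y
  rw [dxx, h]
  exact (hasDerivAt_pd_snd hw (0, 1) t x).deriv

lemma pd2_eval (e₁ e₂ : ℝ × ℝ) (p : ℝ × ℝ) :
    pd2 w e₁ e₂ p =
      fderiv ℝ (fderiv ℝ (fun q : ℝ × ℝ => w q.1 q.2)) p e₁ e₂ := by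
  have hd : DifferentiableAt ℝ (fderiv ℝ (fun q : ℝ × ℝ => w q.1 q.2)) p :=
    ((hw.fderiv_right (m := 1) (by norm_num)).differentiable one_ne_zero) p
  have hcomp :
      HasFDerivAt (pd w e₂)
        ((ContinuousLinearMap.apply ℝ ℂ e₂).comp
          (fderiv ℝ (fderiv ℝ (fun q : ℝ × ℝ => w q.1 q.2)) p)) p :=
    (ContinuousLinearMap.apply ℝ ℂ e₂).hasFDerivAt.comp p hd.hasFDerivAt
  rw [pd2, hcomp.fderiv]
  rfl

lemma pd2_symm (p : ℝ × ℝ) :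
    pd2 w (1, 0) (0, 1) p = pd2 w (0, 1) (1, 0) p := by
  have hsymm : IsSymmSndFDerivAt ℝ (fun q : ℝ × ℝ => w q.1 q.2) p :=
    hw.contDiffAt.isSymmSndFDerivAt (by simp [minSmoothness_of_isRCLikeNormedField])
  rw [pd2_eval hw, pd2_eval hw]
  exact hsymm _ _

end PD

/-- One-dimensional Blagoveščenskiĭ identity for the damped wave equation. -/
theorem stmt0 (a b T : ℝ) (hab : a < b) (hT : 0 < T)
    (ρ σ : ℝ → ℝ)
    (hρ : ContinuousOn ρ (Set.Icc a b)) (hσ : ContinuousOn σ (Set.Icc a b))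
    (hρpos : ∀ x ∈ Set.Icc a b, 0 < ρ x)
    (u v : ℝ → ℝ → ℂ)
    (hu : ContDiff ℝ 2 (fun p : ℝ × ℝ => u p.1 p.2))
    (hv : ContDiff ℝ 2 (fun p : ℝ × ℝ => v p.1 p.2))
    (hueq : ∀ t ∈ Set.Icc (0 : ℝ) (2 * T), ∀ x ∈ Set.Icc a b,
      (ρ x : ℂ) * dtt u t x + (σ x : ℂ) * dt u t x - dxx u t x = 0)
    (hveq : ∀ t ∈ Set.Icc (0 : ℝ) (2 * T), ∀ x ∈ Set.Icc a b,
      (ρ x : ℂ) * dtt v t x + (σ x : ℂ) * dt v t x - dxx v t x = 0)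
    (hu0 : ∀ x ∈ Set.Icc a b, u 0 x = 0 ∧ dt u 0 x = 0)
    (hv0 : ∀ x ∈ Set.Icc a b, v 0 x = 0 ∧ dt v 0 x = 0) :
    ∫ x in a..b, ((ρ x : ℂ) * dt u T x * dt v T x - dx u T x * dx v T x)
      = ∫ τ in (0 : ℝ)..T,
          ((dx u τ b * dt v (2 * T - τ) b - dt u τ b * dx v (2 * T - τ) b)
            - (dx u τ a * dt v (2 * T - τ) a - dt u τ a * dx v (2 * T - τ) a)) := by
  classical
  have hab' : a ≤ b := hab.le
  have huIcc : Set.uIcc a b = Set.Icc a b := Set.uIcc_of_le hab'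
  have huIoc : Set.uIoc a b = Set.Ioc a b := Set.uIoc_of_le hab'
  -- rewrite the goal in terms of `pd`
  simp only [dt_eq hu, dt_eq hv, dx_eq hu, dx_eq hv]
  -- the PDE in `pd` form
  have hueq' : ∀ t ∈ Set.Icc (0:ℝ) (2*T), ∀ x ∈ Set.Icc a b,
      (ρ x : ℂ) * pd2 u (1,0) (1,0) (t,x) + (σ x : ℂ) * pd u (1,0) (t,x)
        - pd2 u (0,1) (0,1) (t,x) = 0 := by
    intro t ht x hx
    have h := hueq t ht x hx
    rwa [dtt_eq hu, dt_eq hu, dxx_eq hu] at h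
  have hveq' : ∀ t ∈ Set.Icc (0:ℝ) (2*T), ∀ x ∈ Set.Icc a b,
      (ρ x : ℂ) * pd2 v (1,0) (1,0) (t,x) + (σ x : ℂ) * pd v (1,0) (t,x)
        - pd2 v (0,1) (0,1) (t,x) = 0 := by
    intro t ht x hx
    have h := hveq t ht x hx
    rwa [dtt_eq hv, dt_eq hv, dxx_eq hv] at h
  -- the bilinear density and its time derivative
  set f : ℝ → ℝ → ℂ := fun τ x =>
    (ρ x : ℂ) * pd u (1,0) (τ,x) * pd v (1,0) (2*T-τ,x)
      - pd u (0,1) (τ,x) * pd v (0,1) (2*T-τ,x) with hf_def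
  set g : ℝ → ℝ → ℂ := fun τ x =>
    ((ρ x : ℂ) * pd2 u (1,0) (1,0) (τ,x) * pd v (1,0) (2*T-τ,x)
      + (ρ x : ℂ) * pd u (1,0) (τ,x) * -pd2 v (1,0) (1,0) (2*T-τ,x))
    - (pd2 u (1,0) (0,1) (τ,x) * pd v (0,1) (2*T-τ,x)
      + pd u (0,1) (τ,x) * -pd2 v (1,0) (0,1) (2*T-τ,x)) with hg_def
  -- time slices of `pd v` along `s ↦ 2T - s`
  have hvslice : ∀ (e : ℝ × ℝ) (τ x : ℝ),
      HasDerivAt (fun s => pd v e (2*T-s, x)) (-pd2 v (1,0) e (2*T-τ, x)) τ := by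
    intro e τ x
    have hlin : HasDerivAt (fun s : ℝ => 2*T - s) (-1 : ℝ) τ := by
      simpa using (hasDerivAt_id' τ).const_sub (2*T)
    have h := (hasDerivAt_pd_fst hv e (2*T-τ) x).scomp τ hlin
    simpa [Function.comp_def] using h
  -- pointwise time derivative of f
  have hfg : ∀ (τ x : ℝ), HasDerivAt (fun s => f s x) (g τ x) τ := by
    intro τ x
    have h1 : HasDerivAt (fun s => (ρ x : ℂ) * pd u (1,0) (s,x))
        ((ρ x : ℂ) * pd2 u (1,0) (1,0) (τ,x)) τ :=
      (hasDerivAt_pd_fst hu (1,0) τ x).const_mul _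
    have h := (h1.mul (hvslice (1,0) τ x)).sub
      ((hasDerivAt_pd_fst hu (0,1) τ x).mul (hvslice (0,1) τ x))
    exact h
  -- continuity facts
  have hcpd_u : ∀ (e : ℝ × ℝ) (s : ℝ), Continuous fun x => pd u e (s, x) := fun e s =>
    (pd_continuous hu e).comp (continuous_const.prodMk continuous_id)
  have hcpd_v : ∀ (e : ℝ × ℝ) (s : ℝ), Continuous fun x => pd v e (s, x) := fun e s =>
    (pd_continuous hv e).comp (continuous_const.prodMk continuous_id)
  have hcpd2_u : ∀ (e e' : ℝ × ℝ) (s : ℝ), Continuous fun x => pd2 u e e' (s, x) :=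
    fun e e' s => (pd2_continuous hu e e').comp (continuous_const.prodMk continuous_id)
  have hcpd2_v : ∀ (e e' : ℝ × ℝ) (s : ℝ), Continuous fun x => pd2 v e e' (s, x) :=
    fun e e' s => (pd2_continuous hv e e').comp (continuous_const.prodMk continuous_id)
  have hρc : ContinuousOn (fun x => (ρ x : ℂ)) (Set.Icc a b) :=
    Complex.continuous_ofReal.comp_continuousOn hρ
  -- measurability of slices
  have hρm : AEStronglyMeasurable (fun x => (ρ x : ℂ)) (volume.restrict (Set.uIoc a b)) := by
    rw [huIoc]
    exact (hρc.mono Set.Ioc_subset_Icc_self).aestronglyMeasurable measurableSet_Ioc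
  have hmf : ∀ s : ℝ, AEStronglyMeasurable (f s) (volume.restrict (Set.uIoc a b)) := by
    intro s
    simp only [hf_def]
    exact ((hρm.mul (hcpd_u (1,0) s).aestronglyMeasurable).mul
        (hcpd_v (1,0) (2*T-s)).aestronglyMeasurable).sub
      ((hcpd_u (0,1) s).aestronglyMeasurable.mul (hcpd_v (0,1) (2*T-s)).aestronglyMeasurable)
  have hmg : ∀ s : ℝ, AEStronglyMeasurable (g s) (volume.restrict (Set.uIoc a b)) := by
    intro s
    simp only [hg_def]
    exact (((hρm.mul (hcpd2_u (1,0) (1,0) s).aestronglyMeasurable).mul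
        (hcpd_v (1,0) (2*T-s)).aestronglyMeasurable).add
      ((hρm.mul (hcpd_u (1,0) s).aestronglyMeasurable).mul
        (hcpd2_v (1,0) (1,0) (2*T-s)).aestronglyMeasurable.neg)).sub
      (((hcpd2_u (1,0) (0,1) s).aestronglyMeasurable.mul
        (hcpd_v (0,1) (2*T-s)).aestronglyMeasurable).add
      ((hcpd_u (0,1) s).aestronglyMeasurable.mul
        (hcpd2_v (1,0) (0,1) (2*T-s)).aestronglyMeasurable.neg))
  have hif : ∀ s : ℝ, IntervalIntegrable (f s) volume a b := by
    intro s
    apply ContinuousOn.intervalIntegrable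
    rw [huIcc]
    simp only [hf_def]
    exact ((hρc.mul (hcpd_u (1,0) s).continuousOn).mul (hcpd_v (1,0) (2*T-s)).continuousOn).sub
      ((hcpd_u (0,1) s).continuousOn.mul (hcpd_v (0,1) (2*T-s)).continuousOn)
  -- differentiation under the integral sign
  have hFderiv : ∀ τ₀ : ℝ, HasDerivAt (fun s => ∫ x in a..b, f s x)
      (∫ x in a..b, g τ₀ x) τ₀ := by
    intro τ₀
    have hKc : IsCompact (Set.Icc (τ₀-1) (τ₀+1) ×ˢ Set.Icc a b) :=
      isCompact_Icc.prod isCompact_Icc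
    have hρK : ContinuousOn (fun p : ℝ × ℝ => (ρ p.2 : ℂ))
        (Set.Icc (τ₀-1) (τ₀+1) ×ˢ Set.Icc a b) :=
      hρc.comp continuous_snd.continuousOn fun p hp => hp.2
    have cu2 : ∀ e e' : ℝ × ℝ, Continuous fun p : ℝ × ℝ => pd2 u e e' (p.1, p.2) :=
      fun e e' => (pd2_continuous hu e e').comp (continuous_fst.prodMk continuous_snd)
    have cu1 : ∀ e : ℝ × ℝ, Continuous fun p : ℝ × ℝ => pd u e (p.1, p.2) :=
      fun e => (pd_continuous hu e).comp (continuous_fst.prodMk continuous_snd)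
    have cv2 : ∀ e e' : ℝ × ℝ, Continuous fun p : ℝ × ℝ => pd2 v e e' (2*T-p.1, p.2) :=
      fun e e' => (pd2_continuous hv e e').comp
        ((continuous_const.sub continuous_fst).prodMk continuous_snd)
    have cv1 : ∀ e : ℝ × ℝ, Continuous fun p : ℝ × ℝ => pd v e (2*T-p.1, p.2) :=
      fun e => (pd_continuous hv e).comp
        ((continuous_const.sub continuous_fst).prodMk continuous_snd)
    have hgc : ContinuousOn (fun p : ℝ × ℝ => g p.1 p.2)
        (Set.Icc (τ₀-1) (τ₀+1) ×ˢ Set.Icc a b) := by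
      simp only [hg_def]
      exact (((hρK.mul (cu2 (1,0) (1,0)).continuousOn).mul (cv1 (1,0)).continuousOn).add
        ((hρK.mul (cu1 (1,0)).continuousOn).mul (cv2 (1,0) (1,0)).continuousOn.neg)).sub
        (((cu2 (1,0) (0,1)).continuousOn.mul (cv1 (0,1)).continuousOn).add
        ((cu1 (0,1)).continuousOn.mul (cv2 (1,0) (0,1)).continuousOn.neg))
    obtain ⟨C, hC⟩ := hKc.exists_bound_of_continuousOn hgc
    have h_bound : ∀ᵐ x ∂(volume : Measure ℝ), x ∈ Set.uIoc a b →
        ∀ s ∈ Metric.ball τ₀ 1, ‖g s x‖ ≤ C := by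
      refine Filter.Eventually.of_forall fun x hx s hs => ?_
      rw [Real.ball_eq_Ioo] at hs
      refine hC (s, x) ⟨⟨hs.1.le, hs.2.le⟩, ?_⟩
      rw [huIoc] at hx
      exact Set.Ioc_subset_Icc_self hx
    have h_diff : ∀ᵐ x ∂(volume : Measure ℝ), x ∈ Set.uIoc a b →
        ∀ s ∈ Metric.ball τ₀ 1, HasDerivAt (fun s => f s x) (g s x) s :=
      Filter.Eventually.of_forall fun x _ s _ => hfg s x
    exact (intervalIntegral.hasDerivAt_integral_of_dominated_loc_of_deriv_le
      (bound := fun _ => C) (Metric.ball_mem_nhds τ₀ one_pos) (Filter.Eventually.of_forall hmf) (hif τ₀) (hmg τ₀)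
      h_bound (intervalIntegrable_const) h_diff).2
  -- the space integral of g is a boundary term
  have key : ∀ τ ∈ Set.uIcc (0:ℝ) T, (∫ x in a..b, g τ x) =
      ((pd u (0,1) (τ,b) * pd v (1,0) (2*T-τ,b) - pd u (1,0) (τ,b) * pd v (0,1) (2*T-τ,b))
        - (pd u (0,1) (τ,a) * pd v (1,0) (2*T-τ,a) - pd u (1,0) (τ,a) * pd v (0,1) (2*T-τ,a))) := by
    intro τ hτ
    rw [Set.uIcc_of_le hT.le] at hτ
    have hG : ∀ x : ℝ, HasDerivAt
        (fun y => pd u (0,1) (τ,y) * pd v (1,0) (2*T-τ,y)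
          - pd u (1,0) (τ,y) * pd v (0,1) (2*T-τ,y))
        ((pd2 u (0,1) (0,1) (τ,x) * pd v (1,0) (2*T-τ,x)
            + pd u (0,1) (τ,x) * pd2 v (0,1) (1,0) (2*T-τ,x))
          - (pd2 u (0,1) (1,0) (τ,x) * pd v (0,1) (2*T-τ,x)
            + pd u (1,0) (τ,x) * pd2 v (0,1) (0,1) (2*T-τ,x))) x := fun x =>
      ((hasDerivAt_pd_snd hu (0,1) τ x).mul (hasDerivAt_pd_snd hv (1,0) (2*T-τ) x)).sub
        ((hasDerivAt_pd_snd hu (1,0) τ x).mul (hasDerivAt_pd_snd hv (0,1) (2*T-τ) x))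
    have h1 : (∫ x in a..b, g τ x) = ∫ x in a..b,
        ((pd2 u (0,1) (0,1) (τ,x) * pd v (1,0) (2*T-τ,x)
            + pd u (0,1) (τ,x) * pd2 v (0,1) (1,0) (2*T-τ,x))
          - (pd2 u (0,1) (1,0) (τ,x) * pd v (0,1) (2*T-τ,x)
            + pd u (1,0) (τ,x) * pd2 v (0,1) (0,1) (2*T-τ,x))) := by
      apply intervalIntegral.integral_congr
      intro x hx
      rw [huIcc] at hx
      have hτ1 : τ ∈ Set.Icc (0:ℝ) (2*T) := ⟨hτ.1, by linarith [hτ.2]⟩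
      have hτ2 : 2*T - τ ∈ Set.Icc (0:ℝ) (2*T) := ⟨by linarith [hτ.2], by linarith [hτ.1]⟩
      have e1 := hueq' τ hτ1 x hx
      have e2 := hveq' (2*T-τ) hτ2 x hx
      have s1 := pd2_symm hu (τ, x)
      have s2 := pd2_symm hv (2*T-τ, x)
      simp only [hg_def]
      linear_combination (pd v (1,0) (2*T-τ,x)) * e1 - (pd u (1,0) (τ,x)) * e2
        - (pd v (0,1) (2*T-τ,x)) * s1 + (pd u (0,1) (τ,x)) * s2
    rw [h1]
    refine intervalIntegral.integral_eq_sub_of_hasDerivAt (fun x _ => hG x) ?_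
    apply Continuous.intervalIntegrable
    exact (((hcpd2_u (0,1) (0,1) τ).mul (hcpd_v (1,0) (2*T-τ))).add
        ((hcpd_u (0,1) τ).mul (hcpd2_v (0,1) (1,0) (2*T-τ)))).sub
        (((hcpd2_u (0,1) (1,0) τ).mul (hcpd_v (0,1) (2*T-τ))).add
        ((hcpd_u (1,0) τ).mul (hcpd2_v (0,1) (0,1) (2*T-τ))))
  -- fundamental theorem of calculus in time
  have hBdcont : Continuous fun τ =>
      ((pd u (0,1) (τ,b) * pd v (1,0) (2*T-τ,b) - pd u (1,0) (τ,b) * pd v (0,1) (2*T-τ,b))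
        - (pd u (0,1) (τ,a) * pd v (1,0) (2*T-τ,a) - pd u (1,0) (τ,a) * pd v (0,1) (2*T-τ,a))) := by
    have cb : ∀ (c : ℝ) (e : ℝ × ℝ), Continuous fun τ : ℝ => pd u e (τ, c) := fun c e =>
      (pd_continuous hu e).comp (continuous_id.prodMk continuous_const)
    have cb' : ∀ (c : ℝ) (e : ℝ × ℝ), Continuous fun τ : ℝ => pd v e (2*T-τ, c) := fun c e =>
      (pd_continuous hv e).comp ((continuous_const.sub continuous_id).prodMk continuous_const)
    exact (((cb b (0,1)).mul (cb' b (1,0))).sub ((cb b (1,0)).mul (cb' b (0,1)))).sub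
      (((cb a (0,1)).mul (cb' a (1,0))).sub ((cb a (1,0)).mul (cb' a (0,1))))
  have hFTC : (∫ τ in (0:ℝ)..T,
      ((pd u (0,1) (τ,b) * pd v (1,0) (2*T-τ,b) - pd u (1,0) (τ,b) * pd v (0,1) (2*T-τ,b))
        - (pd u (0,1) (τ,a) * pd v (1,0) (2*T-τ,a) - pd u (1,0) (τ,a) * pd v (0,1) (2*T-τ,a))))
      = (∫ x in a..b, f T x) - (∫ x in a..b, f 0 x) := by
    apply intervalIntegral.integral_eq_sub_of_hasDerivAt
    · intro τ hτ
      have h := hFderiv τ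
      rwa [key τ hτ] at h
    · exact hBdcont.intervalIntegrable 0 T
  -- initial values vanish
  have hdx0 : ∀ (w : ℝ → ℝ → ℂ), ContDiff ℝ 2 (fun p : ℝ × ℝ => w p.1 p.2) →
      (∀ x ∈ Set.Icc a b, w 0 x = 0) → ∀ x ∈ Set.Icc a b, pd w (0,1) (0,x) = 0 := by
    intro w hw hw0 x hx
    have hcont : Continuous fun y => pd w (0,1) (0,y) :=
      (pd_continuous hw _).comp (continuous_const.prodMk continuous_id)
    have hOo : Set.Ioo a b ⊆ {y | pd w (0,1) (0,y) = 0} := by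
      intro y hy
      have hev : (fun z => w 0 z) =ᶠ[nhds y] fun _ => (0:ℂ) := by
        filter_upwards [Ioo_mem_nhds hy.1 hy.2] with z hz
        exact hw0 z (Set.mem_Icc_of_Ioo hz)
      have hd := (hasDerivAt_dx' hw 0 y).deriv
      rw [Set.mem_setOf_eq, ← hd, hev.deriv_eq, deriv_const]
    have hclosed : IsClosed {y | pd w (0,1) (0,y) = 0} :=
      isClosed_eq hcont continuous_const
    have hsub : Set.Icc a b ⊆ {y | pd w (0,1) (0,y) = 0} := by
      rw [← closure_Ioo hab.ne]
      exact closure_minimal hOo hclosed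
    exact hsub hx
  have hF0 : (∫ x in a..b, f 0 x) = 0 := by
    have hz : Set.EqOn (f 0) (fun _ => (0:ℂ)) (Set.uIcc a b) := by
      intro x hx
      rw [huIcc] at hx
      have h1 : pd u (1,0) (0,x) = 0 := by rw [← dt_eq hu]; exact (hu0 x hx).2
      have h2 : pd u (0,1) (0,x) = 0 := hdx0 u hu (fun y hy => (hu0 y hy).1) x hx
      simp [hf_def, h1, h2]
    rw [intervalIntegral.integral_congr hz, intervalIntegral.integral_zero]
  have hFT : (∫ x in a..b, f T x) = ∫ x in a..b,
      ((ρ x : ℂ) * pd u (1,0) (T,x) * pd v (1,0) (T,x)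
        - pd u (0,1) (T,x) * pd v (0,1) (T,x)) := by
    simp only [hf_def, show 2*T - T = T from by ring]
  rw [hFTC, hF0, sub_zero, hFT]
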